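/- Let α, β be nonzero complex numbers with |α|² + |β|² = 1 and let γ be the unique real root of the cubic z³ + 7z² + 12z − 1. Then |β|² < 1/(4+γ) if and only if |αβ| < |α|²·(1 − |αβ|). -/

import Mathlib

/-- `|β|² < 1/(4+γ)` iff `|αβ| < |α|²(1 − |αβ|)`, where `γ` is the unique real root of
`z³ + 7z² + 12z − 1`. -/
theorem beta_sq_lt_iff (α β : ℂ) (hα : α ≠ 0) (hβ : β ≠ 0)
    (hnorm : ‖α‖ ^ 2 + ‖β‖ ^ 2 = 1)
    (γ : ℝ) (hγ : γ ^ 3 + 7 * γ ^ 2 + 12 * γ - 1 = 0)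
    (hγuniq : ∀ y : ℝ, y ^ 3 + 7 * y ^ 2 + 12 * y - 1 = 0 → y = γ) :
    ‖β‖ ^ 2 < 1 / (4 + γ) ↔
      ‖α * β‖ < ‖α‖ ^ 2 * (1 - ‖α * β‖) := by
  have ha : 0 < ‖α‖ := norm_pos_iff.mpr hα
  have hb : 0 < ‖β‖ := norm_pos_iff.mpr hβ
  have habs : ‖α * β‖ = ‖α‖ * ‖β‖ := norm_mul _ _
  rw [habs]
  set a := ‖α‖
  set b := ‖β‖
  set t := b ^ 2 with htdef
  set s := a * b with hsdef
  have hs0 : 0 < s := mul_pos ha hb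
  have ht0 : 0 < t := by positivity
  have ht1 : t < 1 := by nlinarith
  have hssq : s ^ 2 = t * (1 - t) := by
    have ha2 : a ^ 2 = 1 - t := by linarith
    rw [hsdef, mul_pow, ha2, htdef]; ring
  have hγpos : 0 < γ := by
    by_contra h
    push_neg at h
    nlinarith [sq_nonneg (γ + 7/2), sq_nonneg (γ + 1), sq_nonneg γ, sq_nonneg (γ + 2),
      sq_nonneg (γ + 3), sq_nonneg (γ*(γ+3)), mul_nonneg (sq_nonneg (γ+2)) (neg_nonneg.2 h)]
  have h4γ : (0:ℝ) < 4 + γ := by linarith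
  have hne : (4 + γ) ≠ 0 := ne_of_gt h4γ
  set u := 1 / (4 + γ) with hudef
  have h1 : u * (4 + γ) = 1 := one_div_mul_cancel hne
  have hu0 : 0 < u := by positivity
  have hu14 : u < 1/4 := by
    rw [hudef, div_lt_div_iff₀ h4γ (by norm_num)]
    linarith
  have hpu : u ^ 3 - 4 * u ^ 2 + 5 * u - 1 = 0 := by
    have h2 : (u ^ 3 - 4 * u ^ 2 + 5 * u - 1) * (4 + γ) ^ 3 = 0 := by
      linear_combination (u^2*(4+γ)^2 + u*(4+γ) + 1 - 4*(4+γ)*(u*(4+γ)+1) + 5*(4+γ)^2) * h1 - hγ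
    rcases mul_eq_zero.1 h2 with h | h
    · exact h
    · exact absurd h (pow_ne_zero _ hne)
  have h1t : (0:ℝ) < 1 - t := by linarith
  have h2t : (0:ℝ) < 2 - t := by linarith
  have ha2 : a ^ 2 = 1 - t := by linarith
  have heq : a ^ 2 * (1 - s) - s = (1 - t) - s * (2 - t) := by rw [ha2]; ring
  -- q(t,u) > 0
  have hq : 0 < t ^ 2 + t * u + u ^ 2 - 4 * t - 4 * u + 5 := by
    have hid2 : t ^ 2 + t * u + u ^ 2 - 4 * t - 4 * u + 5 =
        ((2 * t + u - 4) ^ 2 + (2 - 3 * u) * (2 - u)) / 4 := by ring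
    have h23 : (0:ℝ) < (2 - 3 * u) * (2 - u) :=
      mul_pos (by linarith) (by linarith)
    have := sq_nonneg (2 * t + u - 4)
    linarith [hid2]
  -- factorization of the cubic at t through the root u
  have hid3 : t ^ 3 - 4 * t ^ 2 + 5 * t - 1 =
      (t - u) * (t ^ 2 + t * u + u ^ 2 - 4 * t - 4 * u + 5) + (u ^ 3 - 4 * u ^ 2 + 5 * u - 1) := by
    ring
  -- squared comparison identity
  have hid : (1 - t) ^ 2 - (s * (2 - t)) ^ 2 = -((1 - t) * (t ^ 3 - 4 * t ^ 2 + 5 * t - 1)) := by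
    linear_combination (-(2 - t) ^ 2) * hssq
  constructor
  · intro hlt
    have hpt : t ^ 3 - 4 * t ^ 2 + 5 * t - 1 < 0 := by
      have := mul_pos hq (by linarith : (0:ℝ) < u - t)
      nlinarith [hid3]
    have hL2 : (s * (2 - t)) ^ 2 < (1 - t) ^ 2 := by
      have := mul_pos h1t (by linarith : (0:ℝ) < -(t ^ 3 - 4 * t ^ 2 + 5 * t - 1))
      linarith [hid]
    have hkey : s * (2 - t) < 1 - t :=
      lt_of_pow_lt_pow_left₀ 2 (le_of_lt h1t) hL2
    linarith [heq]
  · intro hlt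
    have hkey : s * (2 - t) < 1 - t := by linarith [heq]
    have hL2 : (s * (2 - t)) ^ 2 < (1 - t) ^ 2 :=
      pow_lt_pow_left₀ hkey (le_of_lt (mul_pos hs0 h2t)) (by norm_num)
    have hpt : t ^ 3 - 4 * t ^ 2 + 5 * t - 1 < 0 := by
      by_contra h
      push_neg at h
      have := mul_nonneg (le_of_lt h1t) h
      linarith [hL2, hid]
    by_contra h
    push_neg at h
    have := mul_nonneg (le_of_lt hq) (by linarith : (0:ℝ) ≤ t - u)
    linarith [hid3]
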